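/- Let J = diag(J1,J2,J3) with J1,J2,J3 > 0 and E(w) := J^{-1}(Jw × w). Let (R, ω) solve the free-rotation dynamics R'(t) = R(t)·[ω(t)]ₓ, ω'(t) = E(ω(t)) with R(t₀) ∈ SO(3); suppose ω(t₀) ≠ 0 is an eigenvector of J, and let å ∈ ℝ³ be a unit vector NOT parallel to M := R(t₀)·J·ω(t₀). Set u := M/|M|, a₁ := åᵀu (so a₁² < 1), w := |ω(t₀)|, T := 2π/w, and a(t) := R(t)ᵀ·å. Then the persistent excitation condition holds with parameters T and μ := min(1 − a₁², (1 + a₁²)/2) ∈ (0,1); in particular, for every t and every unit vector x ∈ ℝ³, (1/T)·∫_t^{t+T} (a(s)ᵀx)² ds ≤ 1 − μ. -/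

import Mathlib

open Matrix MeasureTheory intervalIntegral

noncomputable section

attribute [local instance] Matrix.normedAddCommGroup Matrix.normedSpace

/-- Cross product on ℝ³. -/
def cross3 (x y : Fin 3 → ℝ) : Fin 3 → ℝ :=
  ![x 1 * y 2 - x 2 * y 1, x 2 * y 0 - x 0 * y 2, x 0 * y 1 - x 1 * y 0]

/-- Euclidean norm on ℝ³. -/
def enorm3 (x : Fin 3 → ℝ) : ℝ := Real.sqrt (∑ i, (x i) ^ 2)

/-- Skew-symmetric cross-product matrix `[x]ₓ`. -/
def skew3 (x : Fin 3 → ℝ) : Matrix (Fin 3) (Fin 3) ℝ :=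
  !![0, -x 2, x 1; x 2, 0, -x 0; -x 1, x 0, 0]

/-- Persistent excitation condition with parameters `T, μ`. -/
def PE (a : ℝ → Fin 3 → ℝ) (T μ : ℝ) : Prop :=
  ∀ t : ℝ,
    ((T⁻¹ • ∫ τ in t..(t + T), (skew3 (a τ))ᵀ * skew3 (a τ)) -
      μ • (1 : Matrix (Fin 3) (Fin 3) ℝ)).PosSemidef

/-- Squared Euclidean norm on ℝ⁶ = ℝ³ × ℝ³. -/
def nrm6sq (Z : Fin 3 ⊕ Fin 3 → ℝ) : ℝ := ∑ i, (Z i) ^ 2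

/-- The 6×6 block matrix `A = [[−I, [a]ₓ], [[a]ₓ, 0]]`. -/
def Amat (a : Fin 3 → ℝ) : Matrix (Fin 3 ⊕ Fin 3) (Fin 3 ⊕ Fin 3) ℝ :=
  Matrix.fromBlocks (-1) (skew3 a) (skew3 a) 0

/-! ### Auxiliary lemmas -/

abbrev Mat3' := Matrix (Fin 3) (Fin 3) ℝ

lemma dot3_eq_sum_sq (x : Fin 3 → ℝ) : x ⬝ᵥ x = ∑ i, (x i)^2 := by
  simp [dotProduct, sq]

lemma enorm3_nonneg (x : Fin 3 → ℝ) : 0 ≤ enorm3 x := Real.sqrt_nonneg _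

lemma enorm3_sq (x : Fin 3 → ℝ) : enorm3 x ^ 2 = x ⬝ᵥ x := by
  rw [enorm3, dot3_eq_sum_sq, Real.sq_sqrt]
  positivity

lemma dot3_self_eq_zero {x : Fin 3 → ℝ} (h : x ⬝ᵥ x = 0) : x = 0 := by
  rw [dot3_eq_sum_sq, Fin.sum_univ_three] at h
  have h0 : x 0 = 0 := by nlinarith [sq_nonneg (x 0), sq_nonneg (x 1), sq_nonneg (x 2)]
  have h1 : x 1 = 0 := by nlinarith [sq_nonneg (x 0), sq_nonneg (x 1), sq_nonneg (x 2)]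
  have h2 : x 2 = 0 := by nlinarith [sq_nonneg (x 0), sq_nonneg (x 1), sq_nonneg (x 2)]
  funext i
  fin_cases i <;> simpa

lemma enorm3_pos {x : Fin 3 → ℝ} (h : x ≠ 0) : 0 < enorm3 x := by
  rcases lt_or_eq_of_le (enorm3_nonneg x) with h1 | h1
  · exact h1
  · exfalso
    apply h
    apply dot3_self_eq_zero
    rw [← enorm3_sq, ← h1]; ring

lemma enorm3_eq_of_dot {x y : Fin 3 → ℝ} (h : x ⬝ᵥ x = y ⬝ᵥ y) : enorm3 x = enorm3 y := by
  rw [enorm3, enorm3, ← dot3_eq_sum_sq, ← dot3_eq_sum_sq, h]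

lemma enorm3_smul (c : ℝ) (x : Fin 3 → ℝ) : enorm3 (c • x) = |c| * enorm3 x := by
  rw [enorm3, enorm3]
  have : ∑ i, ((c • x) i)^2 = c^2 * ∑ i, (x i)^2 := by
    simp [Fin.sum_univ_three]; ring
  rw [this, Real.sqrt_mul (sq_nonneg c), Real.sqrt_sq_eq_abs]

lemma rot_dot (A : Mat3') (hA : A * Aᵀ = 1) (v u : Fin 3 → ℝ) :
    (Aᵀ.mulVec v) ⬝ᵥ (Aᵀ.mulVec u) = v ⬝ᵥ u := by
  rw [Matrix.dotProduct_mulVec, Matrix.mulVec_transpose, Matrix.vecMul_vecMul, hA,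
    Matrix.vecMul_one]

lemma rot_dot' (A : Mat3') (hA : Aᵀ * A = 1) (v u : Fin 3 → ℝ) :
    (A.mulVec v) ⬝ᵥ (A.mulVec u) = v ⬝ᵥ u := by
  rw [Matrix.dotProduct_mulVec, Matrix.vecMul_mulVec, hA, Matrix.vecMul_one]

lemma cross3_dot_left (x y : Fin 3 → ℝ) : cross3 x y ⬝ᵥ x = 0 := by
  simp [cross3, dotProduct, Fin.sum_univ_three]; ring

lemma cross3_dot_right (x y : Fin 3 → ℝ) : cross3 x y ⬝ᵥ y = 0 := by
  simp [cross3, dotProduct, Fin.sum_univ_three]; ring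

lemma cross3_dot_self (x y : Fin 3 → ℝ) :
    cross3 x y ⬝ᵥ cross3 x y = (x⬝ᵥx)*(y⬝ᵥy) - (x⬝ᵥy)^2 := by
  simp [cross3, dotProduct, Fin.sum_univ_three]; ring

lemma cross3_self (x : Fin 3 → ℝ) : cross3 x x = 0 := by
  funext i; fin_cases i <;> simp [cross3] <;> ring

lemma cross3_smul_left (c : ℝ) (x y : Fin 3 → ℝ) : cross3 (c • x) y = c • cross3 x y := by
  funext i; fin_cases i <;> simp [cross3] <;> ring

lemma skew3_mulVec (v b : Fin 3 → ℝ) : (skew3 v).mulVec b = cross3 v b := by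
  funext i
  fin_cases i <;> simp [skew3, cross3, Matrix.mulVec, dotProduct, Fin.sum_univ_three] <;> ring

lemma skew3_transpose (v : Fin 3 → ℝ) : (skew3 v)ᵀ = - skew3 v := by
  ext i j; fin_cases i <;> fin_cases j <;> simp [skew3]

lemma skew3_sq_mulVec (v b : Fin 3 → ℝ) :
    (skew3 v * skew3 v).mulVec b = (v ⬝ᵥ b) • v - (v ⬝ᵥ v) • b := by
  funext i
  fin_cases i <;>
    simp [skew3, Matrix.mulVec, Matrix.mul_apply, dotProduct, Fin.sum_univ_three] <;> ring

lemma skew3_cube (v : Fin 3 → ℝ) : skew3 v * skew3 v * skew3 v = (-(v ⬝ᵥ v)) • skew3 v := by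
  ext i j
  fin_cases i <;> fin_cases j <;>
    simp [skew3, Matrix.mul_apply, dotProduct, Fin.sum_univ_three] <;> ring

lemma quadform_skew (v x : Fin 3 → ℝ) :
    x ⬝ᵥ ((skew3 v)ᵀ * skew3 v).mulVec x = (v⬝ᵥv)*(x⬝ᵥx) - (v⬝ᵥx)^2 := by
  rw [skew3_transpose]
  simp [skew3, Matrix.mulVec, Matrix.mul_apply, dotProduct, Fin.sum_univ_three]; ring

lemma bessel3 (n b x : Fin 3 → ℝ) (hn : n⬝ᵥn = 1) (hb : b⬝ᵥb = 1)
    (hr : 0 < 1 - (n⬝ᵥb)^2) :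
    ((b⬝ᵥx) - (n⬝ᵥb)*(n⬝ᵥx))^2 + (cross3 n b ⬝ᵥ x)^2
      ≤ (1 - (n⬝ᵥb)^2) * (x⬝ᵥx - (n⬝ᵥx)^2) := by
  set a1 := n⬝ᵥb with ha1
  set α := n⬝ᵥx with hα
  set A := b⬝ᵥx with hA
  set q := cross3 n b with hq
  set B := q⬝ᵥx with hB
  set r2 := 1 - a1^2 with hr2
  set p : Fin 3 → ℝ := b - a1 • n with hp
  set C := A - a1*α with hC
  set d : Fin 3 → ℝ := r2 • x - (r2*α) • n - C • p - B • q with hd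
  have hbn : b ⬝ᵥ n = a1 := by rw [ha1, dotProduct_comm]
  have hxn : x ⬝ᵥ n = α := by rw [hα, dotProduct_comm]
  have hxb : x ⬝ᵥ b = A := by rw [hA, dotProduct_comm]
  have hqn : q ⬝ᵥ n = 0 := cross3_dot_left n b
  have hnq : n ⬝ᵥ q = 0 := by rw [dotProduct_comm]; exact hqn
  have hqb : q ⬝ᵥ b = 0 := cross3_dot_right n b
  have hbq : b ⬝ᵥ q = 0 := by rw [dotProduct_comm]; exact hqb
  have hqq : q ⬝ᵥ q = r2 := by rw [hq, cross3_dot_self, hn, hb, ← ha1, hr2]; ring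
  have hxq : x ⬝ᵥ q = B := by rw [hB, dotProduct_comm]
  have hdd : (0:ℝ) ≤ d ⬝ᵥ d := by
    have : d ⬝ᵥ d = ∑ i, (d i)^2 := by simp [dotProduct, sq]
    rw [this]
    positivity
  have hexp : d ⬝ᵥ d = r2^2*(x⬝ᵥx) - r2^2*α^2 - r2*C^2 - r2*B^2 := by
    simp only [hd, hp, sub_dotProduct, dotProduct_sub, smul_dotProduct, dotProduct_smul,
      smul_eq_mul, hn, hb, hbn, hxn, hxb, hqn, hnq, hqb, hbq, hqq, hxq, ← ha1, ← hα, ← hA, ← hB]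
    ring
  nlinarith [hdd, hexp, hr]

lemma aform_norm (n b : Fin 3 → ℝ) (hn : n⬝ᵥn = 1) (hb : b⬝ᵥb = 1) (c s : ℝ)
    (hcs : s^2 + c^2 = 1) :
    ((n⬝ᵥb)•n + c•(b - (n⬝ᵥb)•n) - s•cross3 n b) ⬝ᵥ
      ((n⬝ᵥb)•n + c•(b - (n⬝ᵥb)•n) - s•cross3 n b) = 1 := by
  set a1 := n⬝ᵥb with ha1
  set q := cross3 n b with hq
  have hbn : b ⬝ᵥ n = a1 := by rw [ha1, dotProduct_comm]
  have hqn : q ⬝ᵥ n = 0 := cross3_dot_left n b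
  have hnq : n ⬝ᵥ q = 0 := by rw [dotProduct_comm]; exact hqn
  have hqb : q ⬝ᵥ b = 0 := cross3_dot_right n b
  have hbq : b ⬝ᵥ q = 0 := by rw [dotProduct_comm]; exact hqb
  have hqq : q ⬝ᵥ q = 1 - a1^2 := by rw [hq, cross3_dot_self, hn, hb, ← ha1]; ring
  simp only [sub_dotProduct, dotProduct_sub, add_dotProduct, dotProduct_add, smul_dotProduct,
    dotProduct_smul, smul_eq_mul, hn, hb, hbn, hqn, hnq, hqb, hbq, hqq, ← ha1]
  ring_nf
  nlinarith [hcs]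

lemma trig_int (w t₀ K C B t : ℝ) (hw : w ≠ 0) :
    ∫ s in t..(t + 2*Real.pi/w),
      (K + C*Real.cos (w*(s-t₀)) - B*Real.sin (w*(s-t₀)))^2
      = (2*Real.pi/w) * (K^2 + (C^2+B^2)/2) := by
  set T := 2*Real.pi/w with hT
  have hθ : ∀ s : ℝ, HasDerivAt (fun s => w*(s-t₀)) w s := by
    intro s
    simpa using (((hasDerivAt_id s).sub_const t₀).const_mul w)
  set G : ℝ → ℝ := fun s =>
    (K^2 + (C^2+B^2)/2)*s + (2*K*C/w)*Real.sin (w*(s-t₀)) + (2*K*B/w)*Real.cos (w*(s-t₀))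
      + ((C^2-B^2)/(2*w))*(Real.sin (w*(s-t₀))*Real.cos (w*(s-t₀)))
      - (C*B/w)*(Real.sin (w*(s-t₀))*Real.sin (w*(s-t₀))) with hG
  have hGd : ∀ s : ℝ, HasDerivAt G
      ((K + C*Real.cos (w*(s-t₀)) - B*Real.sin (w*(s-t₀)))^2) s := by
    intro s
    have hsin : HasDerivAt (fun s => Real.sin (w*(s-t₀))) (Real.cos (w*(s-t₀)) * w) s :=
      (Real.hasDerivAt_sin _).comp s (hθ s)
    have hcos : HasDerivAt (fun s => Real.cos (w*(s-t₀))) (-Real.sin (w*(s-t₀)) * w) s :=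
      (Real.hasDerivAt_cos _).comp s (hθ s)
    have h1 : HasDerivAt (fun s : ℝ => (K^2 + (C^2+B^2)/2)*s) (K^2 + (C^2+B^2)/2) s := by
      simpa using (hasDerivAt_id s).const_mul (K^2 + (C^2+B^2)/2)
    have h2 := hsin.const_mul (2*K*C/w)
    have h3 := hcos.const_mul (2*K*B/w)
    have h4 := (hsin.mul hcos).const_mul ((C^2-B^2)/(2*w))
    have h5 := (hsin.mul hsin).const_mul (C*B/w)
    have := (((h1.add h2).add h3).add h4).sub h5
    refine this.congr_deriv ?_
    symm
    have hpy := Real.sin_sq_add_cos_sq (w*(s-t₀))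
    have hwi : w⁻¹ * w = 1 := inv_mul_cancel₀ hw
    linear_combination ((C^2+B^2)/2) * hpy -
      (2*K*C*Real.cos (w*(s-t₀)) - 2*K*B*Real.sin (w*(s-t₀))
        + (C^2-B^2)*(Real.cos (w*(s-t₀))^2-Real.sin (w*(s-t₀))^2)/2
        - 2*C*B*Real.sin (w*(s-t₀))*Real.cos (w*(s-t₀))) * hwi
  have hcont : Continuous fun s => (K + C*Real.cos (w*(s-t₀)) - B*Real.sin (w*(s-t₀)))^2 := by
    fun_prop
  rw [intervalIntegral.integral_eq_sub_of_hasDerivAt (fun s _ => hGd s)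
    (hcont.intervalIntegrable _ _)]
  have hTw : w * (t + T - t₀) = w*(t-t₀) + 2*Real.pi := by
    rw [hT]; field_simp; ring
  rw [hG]
  simp only [hTw, Real.sin_add_two_pi, Real.cos_add_two_pi]
  ring

def mulRightCLM (S : Mat3') : Mat3' →L[ℝ] Mat3' :=
  LinearMap.toContinuousLinearMap (LinearMap.mulRight ℝ S)

lemma matrix_linear_ODE_unique (S : Mat3') (f g : ℝ → Mat3') (t₀ : ℝ)
    (hf : ∀ t, HasDerivAt f (f t * S) t) (hg : ∀ t, HasDerivAt g (g t * S) t)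
    (h0 : f t₀ = g t₀) : ∀ t, f t = g t := by
  intro t1
  set L := mulRightCLM S with hLdef
  have hL : ∀ X : Mat3', L X = X * S := fun _ => rfl
  have hv : ∀ t : ℝ, LipschitzOnWith _ (fun X : Mat3' => L X) Set.univ :=
    fun _ => (L.lipschitz).lipschitzOnWith
  have ht₀ : t₀ ∈ Set.Ioo (min t₀ t1 - 1) (max t₀ t1 + 1) := by
    constructor <;> linarith [min_le_left t₀ t1, le_max_left t₀ t1]
  have ht1 : t1 ∈ Set.Ioo (min t₀ t1 - 1) (max t₀ t1 + 1) := by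
    constructor <;> linarith [min_le_right t₀ t1, le_max_right t₀ t1]
  exact ODE_solution_unique_of_mem_Ioo (fun t _ => hv t) ht₀
    (fun t _ => ⟨by rw [hL]; exact hf t, Set.mem_univ _⟩)
    (fun t _ => ⟨by rw [hL]; exact hg t, Set.mem_univ _⟩) h0 ht1

lemma rot_sol (S : Mat3') (w t₀ : ℝ) (hw : w ≠ 0) (hS3 : S*S*S = (-(w^2))•S) (R₀ : Mat3') (t : ℝ) :
    HasDerivAt (fun t => R₀ * ((1:Mat3') + (Real.sin (w*(t-t₀))/w)•S
        + ((1-Real.cos (w*(t-t₀)))/w^2)•(S*S)))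
      ((R₀ * ((1:Mat3') + (Real.sin (w*(t-t₀))/w)•S
        + ((1-Real.cos (w*(t-t₀)))/w^2)•(S*S))) * S) t := by
  have hθ : HasDerivAt (fun s : ℝ => w*(s-t₀)) w t := by
    simpa using (((hasDerivAt_id t).sub_const t₀).const_mul w)
  have hsin : HasDerivAt (fun s => Real.sin (w*(s-t₀))) (Real.cos (w*(t-t₀)) * w) t :=
    (Real.hasDerivAt_sin _).comp t hθ
  have hcos : HasDerivAt (fun s => Real.cos (w*(s-t₀))) (-Real.sin (w*(t-t₀)) * w) t :=
    (Real.hasDerivAt_cos _).comp t hθ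
  have h1 : HasDerivAt (fun s => Real.sin (w*(s-t₀))/w) (Real.cos (w*(t-t₀))) t := by
    have := hsin.div_const w
    rwa [mul_div_assoc, div_self hw, mul_one] at this
  have h2 : HasDerivAt (fun s => (1-Real.cos (w*(s-t₀)))/w^2) (Real.sin (w*(t-t₀))/w) t := by
    have := ((hasDerivAt_const t (1:ℝ)).sub hcos).div_const (w^2)
    refine this.congr_deriv ?_
    symm
    field_simp; ring
  have hRod : HasDerivAt (fun t => (1:Mat3') + (Real.sin (w*(t-t₀))/w)•S
      + ((1-Real.cos (w*(t-t₀)))/w^2)•(S*S))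
      (Real.cos (w*(t-t₀))•S + (Real.sin (w*(t-t₀))/w)•(S*S)) t := by
    have := ((hasDerivAt_const t (1:Mat3')).add (h1.smul_const S)).add (h2.smul_const (S*S))
    rw [zero_add] at this
    exact this
  set LL := LinearMap.toContinuousLinearMap (LinearMap.mulLeft ℝ R₀) with hLL
  have hQ := LL.hasFDerivAt.comp_hasDerivAt t hRod
  have hLLa : ∀ X : Mat3', LL X = R₀ * X := fun _ => rfl
  refine hQ.congr_deriv ?_
  show R₀ * _ = _
  symm
  rw [mul_assoc]
  congr 1
  rw [add_mul, add_mul, one_mul, Matrix.smul_mul, Matrix.smul_mul, mul_assoc, ← mul_assoc S S S,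
    hS3, smul_smul]
  have hc : ((1-Real.cos (w*(t-t₀)))/w^2)*(-(w^2)) = Real.cos (w*(t-t₀)) - 1 := by
    field_simp; ring
  rw [hc]
  module

lemma const_of_ODE (E : (Fin 3 → ℝ) → (Fin 3 → ℝ)) (hE : ContDiff ℝ 1 E) (ω : ℝ → Fin 3 → ℝ)
    (hω : ∀ t, HasDerivAt ω (E (ω t)) t) (t₀ : ℝ) (hE0 : E (ω t₀) = 0) : ∀ t, ω t = ω t₀ := by
  have hcont : Continuous ω := continuous_iff_continuousAt.mpr fun t => (hω t).continuousAt
  set Sset : Set ℝ := {t | ω t = ω t₀} with hSset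
  have hclosed : IsClosed Sset := isClosed_eq hcont continuous_const
  have hopen : IsOpen Sset := by
    rw [isOpen_iff_mem_nhds]
    intro t1 ht1
    have ht1' : ω t1 = ω t₀ := ht1
    obtain ⟨K, U, hU, hlip⟩ := (hE.contDiffAt (x := ω t₀)).exists_lipschitzOnWith
    have hv : ∀ t : ℝ, LipschitzOnWith K (fun x => E x) ((fun _ => U) t) := fun _ => hlip
    have hf : ∀ᶠ t in nhds t1, HasDerivAt ω (E (ω t)) t ∧ ω t ∈ U := by
      have hUnhds : U ∈ nhds (ω t1) := by rw [ht1']; exact hU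
      have hev : ∀ᶠ t in nhds t1, ω t ∈ U := hcont.continuousAt (x := t1) hUnhds
      exact hev.mono fun t htt => ⟨hω t, htt⟩
    have hg : ∀ᶠ t in nhds t1,
        HasDerivAt (fun _ : ℝ => ω t₀) (E ((fun _ : ℝ => ω t₀) t)) t ∧ (fun _ : ℝ => ω t₀) t ∈ U := by
      refine Filter.Eventually.of_forall fun t => ⟨?_, mem_of_mem_nhds hU⟩
      rw [hE0]; exact hasDerivAt_const _ _
    have heq := ODE_solution_unique_of_eventually (Filter.Eventually.of_forall hv) hf hg ht1'
    exact Filter.eventually_iff.mp heq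
  have huniv : Sset = Set.univ := IsClopen.eq_univ ⟨hclosed, hopen⟩ ⟨t₀, rfl⟩
  intro t
  have : t ∈ Sset := huniv ▸ Set.mem_univ t
  exact this

def quadLM (x : Fin 3 → ℝ) : Mat3' →ₗ[ℝ] ℝ where
  toFun M := x ⬝ᵥ M.mulVec x
  map_add' M N := by simp [Matrix.add_mulVec, dotProduct_add]
  map_smul' c M := by simp [Matrix.smul_mulVec, dotProduct_smul]

def trLM : Mat3' →ₗ[ℝ] Mat3' where
  toFun M := Mᵀ
  map_add' M N := Matrix.transpose_add M N
  map_smul' c M := Matrix.transpose_smul c M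

lemma rod_apply (v b' : Fin 3 → ℝ) (f g : ℝ) :
    ((1 + f•skew3 v + g•(skew3 v * skew3 v))ᵀ).mulVec b'
      = b' - f • cross3 v b' + g • ((v⬝ᵥb')•v - (v⬝ᵥv)•b') := by
  rw [Matrix.transpose_add, Matrix.transpose_add, Matrix.transpose_one, Matrix.transpose_smul,
    Matrix.transpose_smul, Matrix.transpose_mul, skew3_transpose, neg_mul_neg,
    Matrix.add_mulVec, Matrix.add_mulVec, Matrix.one_mulVec, Matrix.smul_mulVec,
    Matrix.smul_mulVec, Matrix.neg_mulVec, skew3_mulVec, skew3_sq_mulVec]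
  module

set_option maxHeartbeats 2000000 in
/-- in free rotation with `ω(t₀)` an eigenvector of `J` and `å` not
parallel to the angular momentum `M = R(t₀)Jω(t₀)`, the measurement `a(t) = R(t)ᵀå`
satisfies the persistent excitation condition with `T = 2π/w` and
`μ = min(1−a₁², (1+a₁²)/2)`. -/
theorem type1_nonaligned_PE
    (J1 J2 J3 : ℝ) (hJ1 : 0 < J1) (hJ2 : 0 < J2) (hJ3 : 0 < J3)
    (J : Matrix (Fin 3) (Fin 3) ℝ) (hJ : J = Matrix.diagonal ![J1, J2, J3])
    (E : (Fin 3 → ℝ) → Fin 3 → ℝ)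
    (hE : ∀ w, E w = J⁻¹.mulVec (cross3 (J.mulVec w) w))
    (t₀ : ℝ)
    (R : ℝ → Matrix (Fin 3) (Fin 3) ℝ) (ω : ℝ → Fin 3 → ℝ)
    (hRode : ∀ t, HasDerivAt R (R t * skew3 (ω t)) t)
    (hωode : ∀ t, HasDerivAt ω (E (ω t)) t)
    (hR₀orth : (R t₀)ᵀ * R t₀ = 1) (hR₀det : (R t₀).det = 1)
    (hω₀ : ω t₀ ≠ 0)
    (heig : ∃ lam : ℝ, J.mulVec (ω t₀) = lam • ω t₀)
    (aring : Fin 3 → ℝ) (haring : enorm3 aring = 1)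
    (M : Fin 3 → ℝ) (hM : M = (R t₀).mulVec (J.mulVec (ω t₀)))
    (hnotpar : ∀ s : ℝ, aring ≠ s • M)
    (u : Fin 3 → ℝ) (hu : u = (enorm3 M)⁻¹ • M)
    (a1 : ℝ) (ha1 : a1 = aring ⬝ᵥ u)
    (w : ℝ) (hw : w = enorm3 (ω t₀))
    (T : ℝ) (hT : T = 2 * Real.pi / w)
    (μ : ℝ) (hμ : μ = min (1 - a1 ^ 2) ((1 + a1 ^ 2) / 2))
    (a : ℝ → Fin 3 → ℝ) (ha : ∀ t, a t = (R t)ᵀ.mulVec aring) :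
    (0 < μ ∧ μ < 1) ∧ PE a T μ ∧
      ∀ t : ℝ, ∀ x : Fin 3 → ℝ, enorm3 x = 1 →
        (1 / T) * (∫ s in t..(t + T), (a s ⬝ᵥ x) ^ 2) ≤ 1 - μ := by
  -- basic scalar facts
  have hwpos : 0 < w := hw ▸ enorm3_pos hω₀
  have hw0 : w ≠ 0 := ne_of_gt hwpos
  have hw2' : ω t₀ ⬝ᵥ ω t₀ = w^2 := by rw [hw, enorm3_sq]
  have hTpos : 0 < T := by
    rw [hT]; exact div_pos (by linarith [Real.pi_pos]) hwpos
  obtain ⟨lam, hlam⟩ := heig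
  have hlam0 : lam ≠ 0 := by
    intro h
    apply hω₀
    rw [h, zero_smul] at hlam
    funext i
    have h2 := congrFun hlam i
    rw [hJ, Matrix.mulVec_diagonal] at h2
    have hJi : ![J1,J2,J3] i ≠ 0 := by
      fin_cases i
      · exact ne_of_gt hJ1
      · exact ne_of_gt hJ2
      · exact ne_of_gt hJ3
    have := (mul_eq_zero.mp (by simpa using h2)).resolve_left hJi
    simpa using this
  -- ω is constant
  have hEcd : ContDiff ℝ 1 E := by
    have hEfun : E = fun v => J⁻¹.mulVec (cross3 (J.mulVec v) v) := funext hE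
    rw [hEfun]
    have h1 : ContDiff ℝ 1 (fun v : Fin 3 → ℝ => cross3 (J.mulVec v) v) := by
      apply contDiff_pi.mpr
      intro i
      fin_cases i <;>
        simp [cross3, Matrix.mulVec, dotProduct, Fin.sum_univ_three] <;> fun_prop
    exact (Matrix.mulVecLin J⁻¹).toContinuousLinearMap.contDiff.comp h1
  have hE0 : E (ω t₀) = 0 := by
    rw [hE, hlam, cross3_smul_left, cross3_self, smul_zero, Matrix.mulVec_zero]
  have hωc : ∀ t, ω t = ω t₀ := const_of_ODE E hEcd ω hωode t₀ hE0
  -- solve the rotation ODE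
  set S : Mat3' := skew3 (ω t₀) with hS
  have hS3 : S*S*S = (-(w^2))•S := by rw [hS, skew3_cube, hw2']
  set Q : ℝ → Mat3' := fun s => R t₀ * ((1:Mat3') + (Real.sin (w*(s-t₀))/w)•S
      + ((1-Real.cos (w*(s-t₀)))/w^2)•(S*S)) with hQ
  have hQd : ∀ s, HasDerivAt Q (Q s * S) s := fun s => rot_sol S w t₀ hw0 hS3 (R t₀) s
  have hRd : ∀ s, HasDerivAt R (R s * S) s := fun s => by
    have := hRode s
    rwa [hωc s, ← hS] at this
  have hQt0 : R t₀ = Q t₀ := by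
    rw [hQ]
    simp
  have hRQ : ∀ s, R s = Q s := matrix_linear_ODE_unique S R Q t₀ hRd hQd hQt0
  -- geometric setup
  set b : Fin 3 → ℝ := (R t₀)ᵀ.mulVec aring with hb
  set n : Fin 3 → ℝ := w⁻¹ • (ω t₀) with hn
  have hR₀r : R t₀ * (R t₀)ᵀ = 1 := mul_eq_one_comm.mp hR₀orth
  have haa : aring ⬝ᵥ aring = 1 := by rw [← enorm3_sq, haring]; norm_num
  have hbb : b ⬝ᵥ b = 1 := by rw [hb, rot_dot _ hR₀r, haa]
  have hωn : ω t₀ = w • n := by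
    rw [hn, smul_smul, mul_inv_cancel₀ hw0, one_smul]
  have hnn : n ⬝ᵥ n = 1 := by
    rw [hn, smul_dotProduct, dotProduct_smul, hw2', smul_eq_mul, smul_eq_mul]
    field_simp
  set a1' := n ⬝ᵥ b with ha1'
  -- relation between a1 and a1'
  set c0 := aring ⬝ᵥ (R t₀).mulVec (ω t₀) with hc0
  have hMval : M = lam • (R t₀).mulVec (ω t₀) := by rw [hM, hlam, Matrix.mulVec_smul]
  have hRωnorm : enorm3 ((R t₀).mulVec (ω t₀)) = w := by
    rw [hw]; exact enorm3_eq_of_dot (rot_dot' _ hR₀orth _ _)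
  have hMnorm : enorm3 M = |lam| * w := by rw [hMval, enorm3_smul, hRωnorm]
  have hMpos : 0 < enorm3 M := by
    rw [hMnorm]
    exact mul_pos (abs_pos.mpr hlam0) hwpos
  have ha1c : a1 = lam * c0 / (|lam| * w) := by
    rw [ha1, hu, hMnorm, hMval, dotProduct_smul, dotProduct_smul, smul_eq_mul, smul_eq_mul, ← hc0]
    ring
  have ha1'c : a1' = c0 / w := by
    rw [ha1', hn, hb, smul_dotProduct, Matrix.dotProduct_mulVec, Matrix.vecMul_transpose,
      smul_eq_mul, hc0, dotProduct_comm]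
    ring
  have ha1sq : a1^2 = a1'^2 := by
    rw [ha1c, ha1'c, div_pow, div_pow, mul_pow, mul_pow, sq_abs]
    have hl2 : lam^2 ≠ 0 := pow_ne_zero 2 hlam0
    field_simp
  -- strict bound a1² < 1
  have huu : u ⬝ᵥ u = 1 := by
    rw [hu, smul_dotProduct, dotProduct_smul, smul_eq_mul, smul_eq_mul, ← enorm3_sq]
    field_simp [ne_of_gt hMpos]
  have ha1u : aring ⬝ᵥ u = a1 := ha1.symm
  have hua : u ⬝ᵥ aring = a1 := by rw [dotProduct_comm]; exact ha1.symm
  have ha1lt : a1^2 < 1 := by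
    have hdq : (aring - a1 • u) ⬝ᵥ (aring - a1 • u) = 1 - a1^2 := by
      simp only [sub_dotProduct, dotProduct_sub, smul_dotProduct, dotProduct_smul, smul_eq_mul,
        haa, huu, ha1u, hua]
      ring
    have hge : 0 ≤ (aring - a1 • u) ⬝ᵥ (aring - a1 • u) := by
      rw [dot3_eq_sum_sq]; positivity
    rw [hdq] at hge
    rcases eq_or_lt_of_le hge with heq | hlt
    · exfalso
      have hzero : (aring - a1 • u) ⬝ᵥ (aring - a1 • u) = 0 := by rw [hdq, ← heq]
      have := dot3_self_eq_zero hzero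
      have haru : aring = a1 • u := by
        have := sub_eq_zero.mp this
        exact this
      apply hnotpar (a1 * (enorm3 M)⁻¹)
      rw [haru, hu, smul_smul]
    · linarith
  have hr2pos : 0 < 1 - a1'^2 := by rw [← ha1sq]; linarith
  -- μ bounds
  have hμbounds : 0 < μ ∧ μ < 1 := by
    constructor
    · rw [hμ]
      apply lt_min
      · linarith
      · positivity
    · have h1 : μ ≤ (1 + a1^2)/2 := hμ ▸ min_le_right _ _
      linarith
  -- explicit formula for a
  set q : Fin 3 → ℝ := cross3 n b with hq
  have haform : ∀ s, a s = a1'•n + Real.cos (w*(s-t₀))•(b - a1'•n)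
      - Real.sin (w*(s-t₀))•q := by
    intro s
    rw [ha s, hRQ s, hQ]
    rw [Matrix.transpose_mul, ← Matrix.mulVec_mulVec, ← hb, rod_apply, hw2', hωn,
      cross3_smul_left, smul_dotProduct, smul_eq_mul, ← ha1', ← hq]
    match_scalars <;> field_simp <;> ring
  have hax : ∀ s (x' : Fin 3 → ℝ), a s ⬝ᵥ x' = a1'*(n⬝ᵥx')
      + ((b⬝ᵥx') - a1'*(n⬝ᵥx'))*Real.cos (w*(s-t₀)) - (q⬝ᵥx')*Real.sin (w*(s-t₀)) := by
    intro s x'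
    rw [haform s]
    simp only [sub_dotProduct, add_dotProduct, smul_dotProduct, smul_eq_mul]
    ring
  have hanorm : ∀ s, a s ⬝ᵥ a s = 1 := by
    intro s
    rw [haform s, ha1', hq]
    exact aform_norm n b hnn hbb _ _ (Real.sin_sq_add_cos_sq _)
  -- the key integral
  have hintx : ∀ (t : ℝ) (x' : Fin 3 → ℝ), (∫ s in t..(t+T), (a s ⬝ᵥ x')^2)
      = T * ((a1'*(n⬝ᵥx'))^2 + (((b⬝ᵥx') - a1'*(n⬝ᵥx'))^2 + (q⬝ᵥx')^2)/2) := by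
    intro t x'
    rw [hT]
    rw [← trig_int w t₀ (a1'*(n⬝ᵥx')) ((b⬝ᵥx') - a1'*(n⬝ᵥx')) (q⬝ᵥx') t hw0]
    apply intervalIntegral.integral_congr
    intro s _
    dsimp only
    rw [hax s x']
  -- the key pointwise bound
  have hbound : ∀ x' : Fin 3 → ℝ, (a1'*(n⬝ᵥx'))^2
      + (((b⬝ᵥx') - a1'*(n⬝ᵥx'))^2 + (q⬝ᵥx')^2)/2 ≤ (1-μ)*(x'⬝ᵥx') := by
    intro x'
    have hbes := bessel3 n b x' hnn hbb (by rw [← ha1']; exact hr2pos)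
    rw [← ha1'] at hbes
    rw [← hq] at hbes
    have hα2 : (n⬝ᵥx')^2 ≤ x'⬝ᵥx' := by
      have hprod : 0 ≤ (1-a1'^2)*((x'⬝ᵥx') - (n⬝ᵥx')^2) := le_trans (by positivity) hbes
      by_contra hco
      push_neg at hco
      have hneg := mul_pos hr2pos (show 0 < (n⬝ᵥx')^2 - (x'⬝ᵥx') by linarith)
      have hexp : (1-a1'^2)*((n⬝ᵥx')^2-(x'⬝ᵥx'))
          = -((1-a1'^2)*((x'⬝ᵥx')-(n⬝ᵥx')^2)) := by ring
      linarith [hprod, hneg, hexp.le, hexp.ge]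
    have hx2 : 0 ≤ (x'⬝ᵥx') - (n⬝ᵥx')^2 := by linarith
    rw [hμ, ha1sq]
    rcases min_cases (1-a1'^2) ((1+a1'^2)/2) with ⟨hmin, hcmp⟩ | ⟨hmin, hcmp⟩ <;> rw [hmin]
    · have e1 : (((b⬝ᵥx') - a1'*(n⬝ᵥx'))^2 + (q⬝ᵥx')^2)/2
          ≤ ((1-a1'^2)/2)*((x'⬝ᵥx') - (n⬝ᵥx')^2) := by linarith
      have e2 : ((1-a1'^2)/2)*((x'⬝ᵥx') - (n⬝ᵥx')^2)
          ≤ a1'^2*((x'⬝ᵥx') - (n⬝ᵥx')^2) :=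
        mul_le_mul_of_nonneg_right (by linarith) hx2
      have e3 : a1'^2*((x'⬝ᵥx') - (n⬝ᵥx')^2)
          = a1'^2*(x'⬝ᵥx') - a1'^2*(n⬝ᵥx')^2 := by ring
      have e4 : (a1'*(n⬝ᵥx'))^2 = a1'^2*(n⬝ᵥx')^2 := by ring
      linarith [e1, e2, e3.le, e3.ge, e4.le, e4.ge]
    · have e1 : (((b⬝ᵥx') - a1'*(n⬝ᵥx'))^2 + (q⬝ᵥx')^2)/2
          ≤ ((1-a1'^2)/2)*((x'⬝ᵥx') - (n⬝ᵥx')^2) := by linarith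
      have e5 : a1'^2*(n⬝ᵥx')^2 ≤ ((1-a1'^2)/2)*(n⬝ᵥx')^2 :=
        mul_le_mul_of_nonneg_right (by linarith) (sq_nonneg _)
      have e6 : ((1-a1'^2)/2)*((x'⬝ᵥx')-(n⬝ᵥx')^2) + ((1-a1'^2)/2)*(n⬝ᵥx')^2
          = ((1-a1'^2)/2)*(x'⬝ᵥx') := by ring
      have e4 : (a1'*(n⬝ᵥx'))^2 = a1'^2*(n⬝ᵥx')^2 := by ring
      linarith [e1, e5, e6.le, e6.ge, e4.le, e4.ge]
  -- continuity facts
  have hconta : Continuous a := by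
    have : a = fun s => a1'•n + Real.cos (w*(s-t₀))•(b - a1'•n) - Real.sin (w*(s-t₀))•q :=
      funext haform
    rw [this]
    fun_prop
  have hcontax : ∀ x' : Fin 3 → ℝ, Continuous fun s => a s ⬝ᵥ x' := by
    intro x'
    apply continuous_finset_sum
    intro i _
    exact ((continuous_apply i).comp hconta).mul continuous_const
  have hcontsk : Continuous fun τ => skew3 (a τ) := by
    apply continuous_matrix
    intro i j
    have h0 := fun (k : Fin 3) => (continuous_apply k).comp hconta
    fin_cases i <;> fin_cases j <;> simp [skew3] <;>
      first
        | exact continuous_const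
        | exact h0 _
        | exact (h0 _).neg
  have hcontf : Continuous fun τ => (skew3 (a τ))ᵀ * skew3 (a τ) :=
    (hcontsk.matrix_transpose).matrix_mul hcontsk
  refine ⟨hμbounds, ?_, ?_⟩
  · -- PE
    intro t
    rw [Matrix.posSemidef_iff_dotProduct_mulVec]
    constructor
    · -- Hermitian
      have hti : (∫ τ in t..(t+T), (skew3 (a τ))ᵀ * skew3 (a τ))ᵀ
          = ∫ τ in t..(t+T), (skew3 (a τ))ᵀ * skew3 (a τ) := by
        have h := (LinearMap.toContinuousLinearMap trLM).intervalIntegral_comp_comm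
          (μ := MeasureTheory.volume) (hcontf.intervalIntegrable t (t+T))
        have h2 : (fun τ => (LinearMap.toContinuousLinearMap trLM)
            ((skew3 (a τ))ᵀ * skew3 (a τ)))
            = fun τ => (skew3 (a τ))ᵀ * skew3 (a τ) := by
          funext τ
          show ((skew3 (a τ))ᵀ * skew3 (a τ))ᵀ = (skew3 (a τ))ᵀ * skew3 (a τ)
          rw [Matrix.transpose_mul, Matrix.transpose_transpose]
        exact h.symm.trans (intervalIntegral.integral_congr (fun τ _ => congrFun h2 τ))
      show _ᴴ = _
      rw [Matrix.conjTranspose_eq_transpose_of_trivial, Matrix.transpose_sub,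
        Matrix.transpose_smul, Matrix.transpose_smul, Matrix.transpose_one, hti]
    · -- quadratic form
      intro x'
      have hstar : star x' = x' := by
        funext i
        simp
      rw [hstar]
      have hsm : (((T⁻¹ • ∫ τ in t..(t+T), (skew3 (a τ))ᵀ * skew3 (a τ))
          - μ • (1 : Mat3')) *ᵥ x')
          = T⁻¹ • ((∫ τ in t..(t+T), (skew3 (a τ))ᵀ * skew3 (a τ)) *ᵥ x') - μ • x' := by
        rw [Matrix.sub_mulVec, Matrix.smul_mulVec, Matrix.smul_mulVec,
          Matrix.one_mulVec]
      rw [hsm, dotProduct_sub, dotProduct_smul, dotProduct_smul, smul_eq_mul, smul_eq_mul]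
      have hqint : x' ⬝ᵥ ((∫ τ in t..(t+T), (skew3 (a τ))ᵀ * skew3 (a τ)) *ᵥ x')
          = ∫ τ in t..(t+T), (x'⬝ᵥx') - (a τ ⬝ᵥ x')^2 := by
        have h := (LinearMap.toContinuousLinearMap (quadLM x')).intervalIntegral_comp_comm
          (μ := MeasureTheory.volume) (hcontf.intervalIntegrable t (t+T))
        have h2 : (fun τ => (LinearMap.toContinuousLinearMap (quadLM x'))
            ((skew3 (a τ))ᵀ * skew3 (a τ)))
            = fun τ => (x'⬝ᵥx') - (a τ ⬝ᵥ x')^2 := by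
          funext τ
          show x' ⬝ᵥ ((skew3 (a τ))ᵀ * skew3 (a τ)) *ᵥ x' = _
          rw [quadform_skew, hanorm τ, one_mul]
        exact h.symm.trans (intervalIntegral.integral_congr (fun τ _ => congrFun h2 τ))
      rw [hqint]
      have hii : (∫ τ in t..(t+T), ((x'⬝ᵥx') - (a τ ⬝ᵥ x')^2))
          = (x'⬝ᵥx')*T - ∫ s in t..(t+T), (a s ⬝ᵥ x')^2 := by
        rw [intervalIntegral.integral_sub (g := fun s => (a s ⬝ᵥ x')^2) intervalIntegrable_const
          (((hcontax x').pow 2).intervalIntegrable t (t+T)),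
          intervalIntegral.integral_const]
        simp [smul_eq_mul]
        ring
      rw [hii, hintx t x']
      have hb' := hbound x'
      have hxx : 0 ≤ x'⬝ᵥx' := by rw [dot3_eq_sum_sq]; positivity
      have hT0 : T ≠ 0 := ne_of_gt hTpos
      have : T⁻¹ * ((x'⬝ᵥx')*T - T * ((a1'*(n⬝ᵥx'))^2
          + (((b⬝ᵥx') - a1'*(n⬝ᵥx'))^2 + (q⬝ᵥx')^2)/2))
          = (x'⬝ᵥx') - ((a1'*(n⬝ᵥx'))^2
          + (((b⬝ᵥx') - a1'*(n⬝ᵥx'))^2 + (q⬝ᵥx')^2)/2) := by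
        field_simp
      rw [this]
      linarith [hb']
  · -- final bound
    intro t x hx
    have hxx : x ⬝ᵥ x = 1 := by rw [← enorm3_sq, hx]; norm_num
    rw [hintx t x]
    have hb' := hbound x
    rw [hxx, mul_one] at hb'
    have hT0 : T ≠ 0 := ne_of_gt hTpos
    calc (1/T) * (T * ((a1'*(n⬝ᵥx))^2 + (((b⬝ᵥx) - a1'*(n⬝ᵥx))^2 + (q⬝ᵥx)^2)/2))
        = (a1'*(n⬝ᵥx))^2 + (((b⬝ᵥx) - a1'*(n⬝ᵥx))^2 + (q⬝ᵥx)^2)/2 := by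
          field_simp
      _ ≤ 1 - μ := hb'

end
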